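/- A finite ultrametric space (X, d) is isometrically embeddable in the n-dimensional Euclidean space \mathbb{R}^n if and only if |X| \le n + 1. -/

import Mathlib

def IsMetric {X : Type*} (d : X → X → ℝ) : Prop :=
  (∀ x y, d x y = 0 ↔ x = y) ∧ (∀ x y, d x y = d y x) ∧
  (∀ x y z, d x y ≤ d x z + d z y)

def IsUltrametric {X : Type*} (d : X → X → ℝ) : Prop :=
  IsMetric d ∧ ∀ x y z, d x y ≤ max (d x z) (d z y)

def Amenable (f : ℝ → ℝ) : Prop := f 0 = 0 ∧ ∀ x > 0, f x > 0

def MetricPreserving (f : ℝ → ℝ) : Prop :=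
  ∀ (X : Type) (d : X → X → ℝ), IsMetric d → IsMetric (fun x y => f (d x y))

def UltrametricPreserving (f : ℝ → ℝ) : Prop :=
  ∀ (X : Type) (d : X → X → ℝ), IsUltrametric d → IsUltrametric (fun x y => f (d x y))

def TriangleTriplet (a b c : ℝ) : Prop := a ≤ b + c ∧ b ≤ a + c ∧ c ≤ a + b

def StrongTriangleTriplet (a b c : ℝ) : Prop :=
  a ≤ max b c ∧ b ≤ max a c ∧ c ≤ max a b

universe u

lemma metric_nonneg {X : Type u} {d : X → X → ℝ} (h : IsMetric d) (x y : X) : 0 ≤ d x y := by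
  have h1 := h.2.2 x x y
  have h2 := (h.1 x x).mpr rfl
  have h3 := h.2.1 y x
  linarith

lemma metric_self {X : Type u} {d : X → X → ℝ} (h : IsMetric d) (x : X) : d x x = 0 :=
  (h.1 x x).mpr rfl

lemma ultra_restrict {X : Type u} {d : X → X → ℝ} (h : IsUltrametric d) (p : X → Prop) :
    IsUltrametric (fun (a b : Subtype p) => d a b) := by
  obtain ⟨⟨h1, h2, h3⟩, h4⟩ := h
  refine ⟨⟨?_, fun x y => h2 x y, fun x y z => h3 x y z⟩, fun x y z => h4 x y z⟩
  intro x y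
  rw [h1]
  exact ⟨fun e => Subtype.ext e, fun e => by rw [e]⟩

open Finset

lemma key_negtype : ∀ (m : ℕ) (X : Type u) [Fintype X] (d : X → X → ℝ),
    Fintype.card X = m → IsUltrametric d →
    ((∀ D : ℝ, (∀ x y, d x y ≤ D) → ∀ lam : X → ℝ,
        ∑ x, ∑ y, lam x * lam y * d x y ^ 2 ≤ D ^ 2 * (∑ x, lam x) ^ 2) ∧
     (∀ lam : X → ℝ, ∑ x, lam x = 0 → lam ≠ 0 →
        ∑ x, ∑ y, lam x * lam y * d x y ^ 2 < 0)) := by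
  intro m
  induction m using Nat.strong_induction_on with
  | _ m IH =>
  intro X _ d hcard hu
  classical
  have hdnn : ∀ x y, 0 ≤ d x y := metric_nonneg hu.1
  rcases isEmpty_or_nonempty X with hE | hNE
  · constructor
    · intro D hD lam
      simp
    · intro lam hsum hne
      exact absurd (funext fun x => (hE.elim x)) hne
  -- nonempty
  have hPne : (Finset.univ ×ˢ Finset.univ : Finset (X × X)).Nonempty :=
    Finset.univ_nonempty.product Finset.univ_nonempty
  set Dm : ℝ := (Finset.univ ×ˢ Finset.univ : Finset (X × X)).sup' hPne (fun p => d p.1 p.2)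
    with hDmdef
  have hle : ∀ x y, d x y ≤ Dm := fun x y =>
    Finset.le_sup' (f := fun p : X × X => d p.1 p.2)
      (show ((x, y) : X × X) ∈ Finset.univ ×ˢ Finset.univ by simp)
  obtain ⟨p0, _, hp0⟩ := Finset.exists_mem_eq_sup' hPne (fun p : X × X => d p.1 p.2)
  by_cases hDm0 : Dm ≤ 0
  · have hz : ∀ x y, d x y = 0 := fun x y => le_antisymm ((hle x y).trans hDm0) (hdnn x y)
    constructor
    · intro D hD lam
      have h0 : ∑ x, ∑ y, lam x * lam y * d x y ^ 2 = 0 := by simp [hz]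
      rw [h0]; positivity
    · intro lam hsum hne
      obtain ⟨x, hx⟩ : ∃ x, lam x ≠ 0 := by
        by_contra h; push_neg at h; exact hne (funext h)
      have huniv : (Finset.univ : Finset X) = {x} := by
        ext y
        simp only [mem_univ, mem_singleton, true_iff]
        exact (hu.1.1 x y).mp (hz x y) |>.symm
      rw [huniv, Finset.sum_singleton] at hsum
      exact absurd hsum hx
  push_neg at hDm0
  -- the partition into balls of radius < Dm
  set g : X → Finset X := fun x => Finset.univ.filter (fun y => d x y < Dm) with hg
  have hgiff : ∀ x y, g x = g y ↔ d x y < Dm := by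
    intro x y
    constructor
    · intro h
      have hy : y ∈ g y := by simp [hg, metric_self hu.1 y, hDm0]
      rw [← h] at hy
      simpa [hg] using hy
    · intro hxy
      ext z
      simp only [hg, mem_filter, mem_univ, true_and]
      constructor
      · intro hz
        have := hu.2 y z x
        have hyx : d y x < Dm := by rw [← hu.1.2.1 x y]; exact hxy
        exact lt_of_le_of_lt this (max_lt hyx hz)
      · intro hz
        have := hu.2 x z y
        exact lt_of_le_of_lt this (max_lt hxy hz)
  have hcross : ∀ x y, g x ≠ g y → d x y = Dm := fun x y h =>
    le_antisymm (hle x y) (not_lt.mp (mt (hgiff x y).mpr h))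
  have hgne : g p0.1 ≠ g p0.2 := fun h =>
    absurd ((hgiff _ _).mp h) (by rw [← hp0]; exact lt_irrefl _)
  have hfibcard : ∀ b : Finset X, Fintype.card {x : X // g x = b} < m := by
    intro b
    rw [Fintype.card_subtype]
    refine lt_of_lt_of_le (Finset.card_lt_card ?_) (le_of_eq (by rw [Finset.card_univ, hcard]))
    rw [Finset.ssubset_univ_iff]
    intro h
    rw [Finset.eq_univ_iff_forall] at h
    have hall : ∀ x : X, g x = b := fun x => (Finset.mem_filter.mp (h x)).2
    exact hgne ((hall p0.1).trans (hall p0.2).symm)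
  have hdecomp : ∀ f : X → X → ℝ,
      ∑ x, ∑ y, f x y = ∑ b : Finset X, ∑ b' : Finset X,
        ∑ x ∈ Finset.univ.filter (fun x => g x = b),
          ∑ y ∈ Finset.univ.filter (fun y => g y = b'), f x y := by
    intro f
    rw [← Finset.sum_fiberwise Finset.univ g (fun x => ∑ y, f x y)]
    refine Finset.sum_congr rfl fun b _ => ?_
    calc ∑ x ∈ Finset.univ.filter (fun x => g x = b), ∑ y, f x y
        = ∑ x ∈ Finset.univ.filter (fun x => g x = b), ∑ b' : Finset X,
            ∑ y ∈ Finset.univ.filter (fun y => g y = b'), f x y :=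
          Finset.sum_congr rfl fun x _ => (Finset.sum_fiberwise Finset.univ g (f x)).symm
      _ = _ := Finset.sum_comm
  have hsub : ∀ (b : Finset X) (f : X → ℝ),
      ∑ x ∈ Finset.univ.filter (fun x => g x = b), f x = ∑ x : {x : X // g x = b}, f x := by
    intro b f
    exact Finset.sum_subtype _ (by simp) f
  have hclassT : ∀ (b : Finset X) (D : ℝ),
      (∀ u v : {x : X // g x = b}, d u v ≤ D) → ∀ lam : X → ℝ,
      ∑ x ∈ Finset.univ.filter (fun x => g x = b),
        ∑ y ∈ Finset.univ.filter (fun y => g y = b), lam x * lam y * d x y ^ 2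
        ≤ D ^ 2 * (∑ x ∈ Finset.univ.filter (fun x => g x = b), lam x) ^ 2 := by
    intro b D hD lam
    have hres := (IH _ (hfibcard b) {x : X // g x = b} (fun u v => d u v) rfl
      (ultra_restrict hu _)).1 D hD (fun u => lam u)
    calc ∑ x ∈ Finset.univ.filter (fun x => g x = b),
          ∑ y ∈ Finset.univ.filter (fun y => g y = b), lam x * lam y * d x y ^ 2
        = ∑ u : {x : X // g x = b},
            ∑ y ∈ Finset.univ.filter (fun y => g y = b), lam u * lam y * d u y ^ 2 := hsub b _
      _ = ∑ u : {x : X // g x = b}, ∑ v : {x : X // g x = b},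
            lam u * lam v * d u v ^ 2 := Finset.sum_congr rfl fun u _ => hsub b _
      _ ≤ D ^ 2 * (∑ u : {x : X // g x = b}, lam u) ^ 2 := hres
      _ = D ^ 2 * (∑ x ∈ Finset.univ.filter (fun x => g x = b), lam x) ^ 2 := by rw [hsub b]
  have hcrosseq : ∀ b b' : Finset X, b ≠ b' → ∀ lam : X → ℝ,
      ∑ x ∈ Finset.univ.filter (fun x => g x = b),
        ∑ y ∈ Finset.univ.filter (fun y => g y = b'), lam x * lam y * d x y ^ 2
      = Dm ^ 2 * ((∑ x ∈ Finset.univ.filter (fun x => g x = b), lam x) *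
          (∑ y ∈ Finset.univ.filter (fun y => g y = b'), lam y)) := by
    intro b b' hne lam
    have hterm : ∀ x ∈ Finset.univ.filter (fun x => g x = b),
        ∀ y ∈ Finset.univ.filter (fun y => g y = b'),
        lam x * lam y * d x y ^ 2 = Dm ^ 2 * (lam x * lam y) := by
      intro x hx y hy
      have hgx : g x = b := (Finset.mem_filter.mp hx).2
      have hgy : g y = b' := (Finset.mem_filter.mp hy).2
      rw [hcross x y (by rw [hgx, hgy]; exact hne)]
      ring
    calc ∑ x ∈ Finset.univ.filter (fun x => g x = b),
          ∑ y ∈ Finset.univ.filter (fun y => g y = b'), lam x * lam y * d x y ^ 2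
        = ∑ x ∈ Finset.univ.filter (fun x => g x = b),
            ∑ y ∈ Finset.univ.filter (fun y => g y = b'), Dm ^ 2 * (lam x * lam y) :=
          Finset.sum_congr rfl fun x hx => Finset.sum_congr rfl fun y hy => hterm x hx y hy
      _ = _ := by
          rw [Finset.sum_mul_sum, Finset.mul_sum]
          refine Finset.sum_congr rfl fun x _ => ?_
          rw [Finset.mul_sum]
  have hLam : ∀ lam : X → ℝ,
      ∑ b : Finset X, (∑ x ∈ Finset.univ.filter (fun x => g x = b), lam x) = ∑ x, lam x :=
    fun lam => Finset.sum_fiberwise Finset.univ g lam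
  constructor
  · -- part 1
    intro D hD lam
    have hDmD : Dm ≤ D := by
      calc Dm = d p0.1 p0.2 := hDmdef.trans hp0
        _ ≤ D := hD _ _
    rw [hdecomp]
    set L : Finset X → ℝ := fun b => ∑ x ∈ Finset.univ.filter (fun x => g x = b), lam x with hL
    have step : ∀ b b' : Finset X,
        ∑ x ∈ Finset.univ.filter (fun x => g x = b),
          ∑ y ∈ Finset.univ.filter (fun y => g y = b'), lam x * lam y * d x y ^ 2
        ≤ Dm ^ 2 * (L b * L b') := by
      intro b b'
      by_cases h : b = b'
      · subst h
        have := hclassT b Dm (fun u v => hle u v) lam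
        calc _ ≤ Dm ^ 2 * (L b) ^ 2 := this
          _ = Dm ^ 2 * (L b * L b) := by ring
      · exact le_of_eq (hcrosseq b b' h lam)
    calc ∑ b : Finset X, ∑ b' : Finset X,
          ∑ x ∈ Finset.univ.filter (fun x => g x = b),
            ∑ y ∈ Finset.univ.filter (fun y => g y = b'), lam x * lam y * d x y ^ 2
        ≤ ∑ b : Finset X, ∑ b' : Finset X, Dm ^ 2 * (L b * L b') :=
          Finset.sum_le_sum fun b _ => Finset.sum_le_sum fun b' _ => step b b'
      _ = Dm ^ 2 * ((∑ b : Finset X, L b) * (∑ b' : Finset X, L b')) := by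
          rw [Finset.sum_mul_sum, Finset.mul_sum]
          refine Finset.sum_congr rfl fun b _ => ?_
          rw [Finset.mul_sum]
      _ = Dm ^ 2 * (∑ x, lam x) ^ 2 := by rw [hL]; simp only [hLam lam]; ring
      _ ≤ D ^ 2 * (∑ x, lam x) ^ 2 := by
          have h1 : Dm ^ 2 ≤ D ^ 2 := pow_le_pow_left₀ (le_of_lt hDm0) hDmD 2
          exact mul_le_mul_of_nonneg_right h1 (sq_nonneg _)
  · -- part 2
    intro lam hsum hne
    obtain ⟨x₀, hx₀⟩ : ∃ x, lam x ≠ 0 := by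
      by_contra h; push_neg at h; exact hne (funext h)
    set L : Finset X → ℝ := fun b => ∑ x ∈ Finset.univ.filter (fun x => g x = b), lam x with hL
    have hLsum : ∑ b : Finset X, L b = 0 := (hLam lam).trans hsum
    rw [hdecomp]
    set W : Finset X → Finset X → ℝ := fun b b' =>
      ∑ x ∈ Finset.univ.filter (fun x => g x = b),
        ∑ y ∈ Finset.univ.filter (fun y => g y = b'), lam x * lam y * d x y ^ 2 with hW
    have hWle : ∀ b b' : Finset X, W b b' ≤ Dm ^ 2 * (L b * L b') := by
      intro b b'
      by_cases h : b = b'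
      · subst h
        calc W b b ≤ Dm ^ 2 * (L b) ^ 2 := hclassT b Dm (fun u v => hle u v) lam
          _ = Dm ^ 2 * (L b * L b) := by ring
      · exact le_of_eq (hcrosseq b b' h lam)
    have hWcross : ∀ b b' : Finset X, b ≠ b' → W b b' = Dm ^ 2 * (L b * L b') :=
      fun b b' h => hcrosseq b b' h lam
    have hinner_le : ∀ b : Finset X, ∑ b' : Finset X, W b b' ≤ 0 := by
      intro b
      calc ∑ b' : Finset X, W b b' ≤ ∑ b' : Finset X, Dm ^ 2 * (L b * L b') :=
            Finset.sum_le_sum fun b' _ => hWle b b'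
        _ = Dm ^ 2 * (L b * ∑ b' : Finset X, L b') := by
            rw [← Finset.mul_sum, ← Finset.mul_sum]
        _ = 0 := by rw [hLsum]; ring
    have hstrict : ∃ b : Finset X, ∑ b' : Finset X, W b b' < 0 := by
      by_cases hA : ∃ b : Finset X, L b ≠ 0
      · obtain ⟨bs, hbs⟩ := hA
        -- the fiber of bs is nonempty
        have hfibne : (Finset.univ.filter (fun x => g x = bs)).Nonempty := by
          by_contra h
          rw [Finset.not_nonempty_iff_eq_empty] at h
          exact hbs (by rw [hL]; simp [h])
        obtain ⟨xs, hxs⟩ := hfibne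
        have hSne : Nonempty {x : X // g x = bs} := ⟨⟨xs, (Finset.mem_filter.mp hxs).2⟩⟩
        set Db : ℝ := (Finset.univ : Finset ({x : X // g x = bs} × {x : X // g x = bs})).sup'
          Finset.univ_nonempty (fun p => d p.1.1 p.2.1) with hDbdef
        have hDb_le : ∀ u v : {x : X // g x = bs}, d u v ≤ Db := fun u v =>
          Finset.le_sup' (f := fun p : {x : X // g x = bs} × {x : X // g x = bs} => d p.1.1 p.2.1)
            (Finset.mem_univ (u, v))
        obtain ⟨q0, _, hq0⟩ := Finset.exists_mem_eq_sup'
          (Finset.univ_nonempty (α := {x : X // g x = bs} × {x : X // g x = bs}))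
          (fun p => d p.1.1 p.2.1)
        have hDb_lt : Db < Dm := by
          calc Db = d q0.1.1 q0.2.1 := hDbdef.trans hq0
            _ < Dm := (hgiff q0.1.1 q0.2.1).mp (q0.1.2.trans q0.2.2.symm)
        have hDb_nn : 0 ≤ Db := by
          calc (0:ℝ) ≤ d q0.1.1 q0.2.1 := hdnn _ _
            _ = Db := (hDbdef.trans hq0).symm
        refine ⟨bs, ?_⟩
        have hdiag : W bs bs ≤ Db ^ 2 * (L bs) ^ 2 := hclassT bs Db hDb_le lam
        have hsplit : ∑ b' : Finset X, W bs b' = W bs bs + ∑ b' ∈ Finset.univ.erase bs, W bs b' :=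
          (Finset.add_sum_erase _ _ (Finset.mem_univ bs)).symm
        have hrest : ∑ b' ∈ Finset.univ.erase bs, W bs b' = Dm ^ 2 * (L bs * (0 - L bs)) := by
          have : ∀ b' ∈ Finset.univ.erase bs, W bs b' = Dm ^ 2 * (L bs * L b') := by
            intro b' hb'
            exact hWcross bs b' (Finset.ne_of_mem_erase hb').symm
          rw [Finset.sum_congr rfl this, ← Finset.mul_sum, ← Finset.mul_sum,
            Finset.sum_erase_eq_sub (Finset.mem_univ bs), hLsum]
        rw [hsplit, hrest]
        have h1 : Db ^ 2 < Dm ^ 2 := by nlinarith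
        have h2 : 0 < (L bs) ^ 2 := by positivity
        nlinarith
      · push_neg at hA
        set b0 : Finset X := g x₀ with hb0
        refine ⟨b0, ?_⟩
        have hx₀mem : x₀ ∈ Finset.univ.filter (fun x => g x = b0) := by simp [hb0]
        have hdiag : W b0 b0 < 0 := by
          have hres := (IH _ (hfibcard b0) {x : X // g x = b0} (fun u v => d u v) rfl
            (ultra_restrict hu _)).2 (fun u => lam u)
            (by rw [← hsub b0 lam]; exact hA b0)
            (fun h => hx₀ (congrFun h ⟨x₀, rfl⟩))
          calc W b0 b0 = ∑ u : {x : X // g x = b0},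
                ∑ y ∈ Finset.univ.filter (fun y => g y = b0), lam u * lam y * d u y ^ 2 :=
              hsub b0 _
            _ = ∑ u : {x : X // g x = b0}, ∑ v : {x : X // g x = b0}, lam u * lam v * d u v ^ 2 :=
              Finset.sum_congr rfl fun u _ => hsub b0 _
            _ < 0 := hres
        have hsplit : ∑ b' : Finset X, W b0 b' = W b0 b0 + ∑ b' ∈ Finset.univ.erase b0, W b0 b' :=
          (Finset.add_sum_erase _ _ (Finset.mem_univ b0)).symm
        have hrest : ∑ b' ∈ Finset.univ.erase b0, W b0 b' = 0 := by
          refine Finset.sum_eq_zero fun b' hb' => ?_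
          rw [hWcross b0 b' (Finset.ne_of_mem_erase hb').symm, hA b', mul_zero, mul_zero]
        rw [hsplit, hrest, add_zero]
        exact hdiag
    obtain ⟨bs, hbs⟩ := hstrict
    calc ∑ b : Finset X, ∑ b' : Finset X, W b b' < ∑ b : Finset X, (0 : ℝ) :=
        Finset.sum_lt_sum (fun b _ => hinner_le b) ⟨bs, Finset.mem_univ bs, hbs⟩
      _ = 0 := by simp

open scoped RealInnerProductSpace

lemma forward_dir {n : ℕ} {X : Type u} [Fintype X] {d : X → X → ℝ}
    (hd : IsUltrametric d) (Φ : X → EuclideanSpace ℝ (Fin n))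
    (hΦ : ∀ x y, dist (Φ x) (Φ y) = d x y) : Fintype.card X ≤ n + 1 := by
  classical
  by_contra hlt
  push_neg at hlt
  have hNE : Nonempty X := Fintype.card_pos_iff.mp (by omega)
  obtain ⟨x₀⟩ := hNE
  have hcard' : Fintype.card {x : X // ¬ x = x₀} = Fintype.card X - 1 := by
    rw [Fintype.card_subtype_compl, Fintype.card_subtype_eq]
  set w : X → EuclideanSpace ℝ (Fin n) := fun x => Φ x - Φ x₀ with hw
  have hnli : ¬ LinearIndependent ℝ (fun u : {x : X // ¬ x = x₀} => w u) := by
    intro h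
    have hle := h.fintype_card_le_finrank
    rw [finrank_euclideanSpace_fin] at hle
    omega
  obtain ⟨gco, hg0, i0, hi0⟩ := Fintype.not_linearIndependent_iff.mp hnli
  set lam : X → ℝ := fun x => if h : x = x₀ then -(∑ u : {x : X // ¬ x = x₀}, gco u) else gco ⟨x, h⟩
    with hlam
  have hsplit : ∀ f : X → ℝ, ∑ x, f x = f x₀ + ∑ u : {x : X // ¬ x = x₀}, f u := by
    intro f
    rw [← Finset.add_sum_erase _ _ (Finset.mem_univ x₀)]
    congr 1
    exact Finset.sum_subtype _ (fun x => by simp [Finset.mem_erase]) f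
  have hlamu : ∀ u : {x : X // ¬ x = x₀}, lam u = gco u := by
    intro u; rw [hlam]; simp only [dif_neg u.2]
  have hsum : ∑ x, lam x = 0 := by
    rw [hsplit lam]
    rw [show lam x₀ = -(∑ u : {x : X // ¬ x = x₀}, gco u) from by rw [hlam]; simp]
    rw [Finset.sum_congr rfl (fun u _ => hlamu u)]
    ring
  have hlamne : lam ≠ 0 := by
    intro h
    exact hi0 (by rw [← hlamu i0, h]; rfl)
  have hcomb : ∑ x : X, lam x • w x = 0 := by
    have hsplitV : ∀ f : X → EuclideanSpace ℝ (Fin n),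
        ∑ x, f x = f x₀ + ∑ u : {x : X // ¬ x = x₀}, f u := by
      intro f
      rw [← Finset.add_sum_erase _ _ (Finset.mem_univ x₀)]
      congr 1
      exact Finset.sum_subtype _ (fun x => by simp [Finset.mem_erase]) f
    rw [hsplitV (fun x => lam x • w x)]
    have h1 : w x₀ = 0 := by simp [hw]
    rw [h1, smul_zero, zero_add]
    rw [Finset.sum_congr rfl (fun u _ => by rw [hlamu u])]
    exact hg0
  have hd2 : ∀ x y, d x y ^ 2 = ‖w x‖ ^ 2 - 2 * ⟪w x, w y⟫ + ‖w y‖ ^ 2 := by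
    intro x y
    rw [← hΦ x y, dist_eq_norm, show Φ x - Φ y = w x - w y from by simp [hw],
      norm_sub_sq_real]
  have hT1 : ∑ x, ∑ y, lam x * lam y * ‖w x‖ ^ 2 = 0 := by
    refine Finset.sum_eq_zero fun x _ => ?_
    have : ∑ y, lam x * lam y * ‖w x‖ ^ 2 = (lam x * ‖w x‖ ^ 2) * ∑ y, lam y := by
      rw [Finset.mul_sum]
      exact Finset.sum_congr rfl fun y _ => by ring
    rw [this, hsum, mul_zero]
  have hT2 : ∑ x, ∑ y, lam x * lam y * ‖w y‖ ^ 2 = 0 := by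
    have hx : ∀ x, ∑ y, lam x * lam y * ‖w y‖ ^ 2 = lam x * ∑ y, lam y * ‖w y‖ ^ 2 := by
      intro x
      rw [Finset.mul_sum]
      exact Finset.sum_congr rfl fun y _ => by ring
    rw [Finset.sum_congr rfl (fun x _ => hx x), ← Finset.sum_mul, hsum, zero_mul]
  have hT3 : ∑ x, ∑ y, lam x * lam y * ⟪w x, w y⟫ = 0 := by
    have : ∑ x, ∑ y, lam x * lam y * ⟪w x, w y⟫
        = ⟪∑ x, lam x • w x, ∑ y, lam y • w y⟫ := by
      rw [sum_inner]
      refine Finset.sum_congr rfl fun x _ => ?_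
      rw [real_inner_smul_left, inner_sum, Finset.mul_sum]
      refine Finset.sum_congr rfl fun y _ => ?_
      rw [real_inner_smul_right]; ring
    rw [this, hcomb, inner_zero_left]
  have hquad : ∑ x, ∑ y, lam x * lam y * d x y ^ 2 = 0 := by
    have hexp : ∀ x y : X, lam x * lam y * d x y ^ 2 =
        lam x * lam y * ‖w x‖ ^ 2 - 2 * (lam x * lam y * ⟪w x, w y⟫)
          + lam x * lam y * ‖w y‖ ^ 2 := by
      intro x y; rw [hd2]; ring
    calc ∑ x, ∑ y, lam x * lam y * d x y ^ 2
        = ∑ x, ∑ y, (lam x * lam y * ‖w x‖ ^ 2 - 2 * (lam x * lam y * ⟪w x, w y⟫)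
            + lam x * lam y * ‖w y‖ ^ 2) :=
          Finset.sum_congr rfl fun x _ => Finset.sum_congr rfl fun y _ => hexp x y
      _ = (∑ x, ∑ y, lam x * lam y * ‖w x‖ ^ 2)
            - 2 * (∑ x, ∑ y, lam x * lam y * ⟪w x, w y⟫)
            + ∑ x, ∑ y, lam x * lam y * ‖w y‖ ^ 2 := by
          simp only [Finset.sum_add_distrib, Finset.sum_sub_distrib, ← Finset.mul_sum]
      _ = 0 := by rw [hT1, hT2, hT3]; ring
  have := (key_negtype (Fintype.card X) X d rfl hd).2 lam hsum hlamne
  rw [hquad] at this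
  exact lt_irrefl 0 this

lemma backward_dir {n : ℕ} {X : Type u} [Fintype X] {d : X → X → ℝ}
    (hd : IsUltrametric d) (hcard : Fintype.card X ≤ n + 1) :
    ∃ Φ : X → EuclideanSpace ℝ (Fin n), ∀ x y, dist (Φ x) (Φ y) = d x y := by
  classical
  rcases isEmpty_or_nonempty X with hE | hNE
  · exact ⟨fun x => isEmptyElim x, fun x => isEmptyElim x⟩
  obtain ⟨x₀⟩ := hNE
  have hdnn := metric_nonneg hd.1
  have hcard' : Fintype.card {x : X // ¬ x = x₀} ≤ n := by
    rw [Fintype.card_subtype_compl, Fintype.card_subtype_eq]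
    have : 0 < Fintype.card X := Fintype.card_pos_iff.mpr ⟨x₀⟩
    omega
  have hsplit : ∀ f : X → ℝ, ∑ x, f x = f x₀ + ∑ u : {x : X // ¬ x = x₀}, f u := by
    intro f
    rw [← Finset.add_sum_erase _ _ (Finset.mem_univ x₀)]
    congr 1
    exact Finset.sum_subtype _ (fun x => by simp [Finset.mem_erase]) f
  set B : Matrix {x : X // ¬ x = x₀} {x : X // ¬ x = x₀} ℝ :=
    fun u v => (d x₀ u ^ 2 + d x₀ v ^ 2 - d u v ^ 2) / 2 with hB
  have hBval : ∀ u v : {x : X // ¬ x = x₀},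
      B u v = (d x₀ u ^ 2 + d x₀ v ^ 2 - d u v ^ 2) / 2 := fun u v => rfl
  have hBps : B.PosSemidef := by
    rw [Matrix.posSemidef_iff_dotProduct_mulVec]
    constructor
    · ext u v
      simp only [Matrix.conjTranspose_apply, star_trivial, hBval]
      rw [hd.1.2.1 (v : X) u]
      ring
    · intro v
      set lam : X → ℝ := fun x => if h : x = x₀ then -(∑ u : {x : X // ¬ x = x₀}, v u)
        else v ⟨x, h⟩ with hlam
      have hlamu : ∀ u : {x : X // ¬ x = x₀}, lam u = v u := by
        intro u; rw [hlam]; simp only [dif_neg u.2]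
      have hlam0 : lam x₀ = -(∑ u : {x : X // ¬ x = x₀}, v u) := by rw [hlam]; simp
      have hsum : ∑ x, lam x = 0 := by
        rw [hsplit lam, hlam0, Finset.sum_congr rfl (fun u _ => hlamu u)]
        ring
      set D : ℝ := ∑ x, ∑ y, d x y with hDdef
      have hDb : ∀ a b, d a b ≤ D := by
        intro a b
        calc d a b ≤ ∑ y, d a y := Finset.single_le_sum (fun y _ => hdnn a y) (Finset.mem_univ b)
          _ ≤ ∑ x, ∑ y, d x y :=
            Finset.single_le_sum (f := fun x => ∑ y, d x y)
              (fun x _ => Finset.sum_nonneg fun y _ => hdnn x y) (Finset.mem_univ a)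
      have hT := (key_negtype (Fintype.card X) X d rfl hd).1 D hDb lam
      rw [hsum] at hT
      have hT' : ∑ x, ∑ y, lam x * lam y * d x y ^ 2 ≤ 0 := by simpa using hT
      set s : ℝ := ∑ u : {x : X // ¬ x = x₀}, v u with hs
      set t : ℝ := ∑ u : {x : X // ¬ x = x₀}, v u * d x₀ u ^ 2 with ht
      set S3 : ℝ := ∑ u : {x : X // ¬ x = x₀}, ∑ w : {x : X // ¬ x = x₀},
        v u * v w * d u w ^ 2 with hS3
      have claim1 : dotProduct (star v) (B.mulVec v) = (t * s + s * t - S3) / 2 := by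
        have h0 : dotProduct (star v) (B.mulVec v)
            = ∑ u : {x : X // ¬ x = x₀}, v u * ∑ w : {x : X // ¬ x = x₀}, B u w * v w := by
          simp [dotProduct, Matrix.mulVec]
        rw [h0]
        have h1 : ∀ u : {x : X // ¬ x = x₀},
            v u * ∑ w : {x : X // ¬ x = x₀}, B u w * v w
            = (v u * d x₀ u ^ 2) * s / 2 + v u * t / 2
              - (∑ w : {x : X // ¬ x = x₀}, v u * v w * d u w ^ 2) / 2 := by
          intro u
          rw [Finset.mul_sum]
          have hterm : ∀ w : {x : X // ¬ x = x₀}, v u * (B u w * v w)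
              = (v u * d x₀ u ^ 2) * v w / 2 + v u * (v w * d x₀ w ^ 2) / 2
                - (v u * v w * d u w ^ 2) / 2 := by
            intro w; rw [hBval]; ring
          rw [Finset.sum_congr rfl fun w _ => hterm w]
          rw [Finset.sum_sub_distrib, Finset.sum_add_distrib, ← Finset.sum_div,
            ← Finset.sum_div, ← Finset.sum_div, ← Finset.mul_sum, ← Finset.mul_sum,
            ← hs, ← ht]
        rw [Finset.sum_congr rfl fun u _ => h1 u]
        rw [Finset.sum_sub_distrib, Finset.sum_add_distrib, ← Finset.sum_div,
          ← Finset.sum_div, ← Finset.sum_div, ← Finset.sum_mul, ← Finset.sum_mul,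
          ← hs, ← ht, ← hS3]
        ring
      have claim2 : ∑ x, ∑ y, lam x * lam y * d x y ^ 2 = S3 - 2 * s * t := by
        rw [hsplit (fun x => ∑ y, lam x * lam y * d x y ^ 2)]
        have hF : ∀ x : X, ∑ y, lam x * lam y * d x y ^ 2
            = lam x * lam x₀ * d x x₀ ^ 2
              + ∑ w : {x : X // ¬ x = x₀}, lam x * lam ↑w * d x ↑w ^ 2 :=
          fun x => hsplit (fun y => lam x * lam y * d x y ^ 2)
        rw [hF x₀, Finset.sum_congr rfl fun (u : {x : X // ¬ x = x₀}) _ => hF ↑u]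
        have h1 : ∑ w : {x : X // ¬ x = x₀}, lam x₀ * lam ↑w * d x₀ ↑w ^ 2 = -s * t := by
          have hterm : ∀ w : {x : X // ¬ x = x₀}, lam x₀ * lam ↑w * d x₀ ↑w ^ 2
              = -s * (v w * d x₀ ↑w ^ 2) := fun w => by rw [hlam0, hlamu]; ring
          rw [Finset.sum_congr rfl fun w _ => hterm w, ← Finset.mul_sum, ← ht]
        have h2 : ∑ u : {x : X // ¬ x = x₀},
            (lam ↑u * lam x₀ * d ↑u x₀ ^ 2
              + ∑ w : {x : X // ¬ x = x₀}, lam ↑u * lam ↑w * d ↑u ↑w ^ 2)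
            = -s * t + S3 := by
          rw [Finset.sum_add_distrib]
          congr 1
          · have hterm : ∀ u : {x : X // ¬ x = x₀}, lam ↑u * lam x₀ * d ↑u x₀ ^ 2
                = -s * (v u * d x₀ ↑u ^ 2) := fun u => by
              rw [hlam0, hlamu, hd.1.2.1 (↑u) x₀]; ring
            rw [Finset.sum_congr rfl fun u _ => hterm u, ← Finset.mul_sum, ← ht]
          · rw [hS3]
            exact Finset.sum_congr rfl fun u _ => Finset.sum_congr rfl fun w _ => by
              rw [hlamu, hlamu]
        rw [h1, h2, metric_self hd.1 x₀]
        ring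
      rw [claim1]
      rw [claim2] at hT'
      linarith
  obtain ⟨C, hC⟩ : ∃ C : Matrix {x : X // ¬ x = x₀} {x : X // ¬ x = x₀} ℝ, B = C.conjTranspose * C := by
    open scoped MatrixOrder in
    obtain ⟨C, hC⟩ := CStarAlgebra.nonneg_iff_eq_star_mul_self.mp hBps.nonneg
    exact ⟨C, by simpa [Matrix.star_eq_conjTranspose] using hC⟩
  have hBentry : ∀ u w : {x : X // ¬ x = x₀},
      B u w = ∑ k : {x : X // ¬ x = x₀}, C k u * C k w := by
    intro u w
    rw [hC]
    simp [Matrix.mul_apply, Matrix.conjTranspose_apply]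
  have hCC : ∀ (a : X) (ha : ¬ a = x₀) (b : X) (hb : ¬ b = x₀),
      ∑ k : {x : X // ¬ x = x₀}, C k ⟨a, ha⟩ * C k ⟨b, hb⟩
        = (d x₀ a ^ 2 + d x₀ b ^ 2 - d a b ^ 2) / 2 := by
    intro a ha b hb
    rw [← hBentry]
  obtain ⟨ι⟩ : Nonempty ({x : X // ¬ x = x₀} ↪ Fin n) :=
    Function.Embedding.nonempty_of_card_le (by simpa using hcard')
  set Mcol : {x : X // ¬ x = x₀} → X → ℝ := fun k x => if h : x = x₀ then 0 else C k ⟨x, h⟩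
    with hM
  have hM0 : ∀ k, Mcol k x₀ = 0 := fun k => by rw [hM]; simp
  have hMne : ∀ k (x : X) (hx : ¬ x = x₀), Mcol k x = C k ⟨x, hx⟩ := fun k x hx => by
    rw [hM]; simp [hx]
  set Φ : X → EuclideanSpace ℝ (Fin n) :=
    fun x => WithLp.toLp 2 (fun i => ∑ k : {x : X // ¬ x = x₀}, if ι k = i then Mcol k x else 0) with hΦdef
  have hB2 : ∀ gf : {x : X // ¬ x = x₀} → ℝ,
      ∑ i : Fin n, (∑ k : {x : X // ¬ x = x₀}, if ι k = i then gf k else 0) ^ 2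
        = ∑ k : {x : X // ¬ x = x₀}, gf k ^ 2 := by
    intro gf
    have hvan : ∀ i ∈ Finset.univ, i ∉ Finset.image ι Finset.univ →
        (∑ k : {x : X // ¬ x = x₀}, if ι k = i then gf k else 0) ^ 2 = 0 := by
      intro i _ hni
      have hz : ∀ k : {x : X // ¬ x = x₀}, ι k ≠ i := fun k h =>
        hni (Finset.mem_image.mpr ⟨k, Finset.mem_univ k, h⟩)
      rw [Finset.sum_eq_zero fun k _ => if_neg (hz k)]
      simp
    rw [← Finset.sum_subset (Finset.subset_univ _) hvan,
      Finset.sum_image (fun a _ b _ h => ι.injective h)]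
    refine Finset.sum_congr rfl fun k _ => ?_
    congr 1
    simp only [EmbeddingLike.apply_eq_iff_eq]
    rw [Finset.sum_ite_eq' Finset.univ k gf]
    simp
  have hM0' : ∀ (k : {x : X // ¬ x = x₀}) (x : X), x = x₀ → Mcol k x = 0 := by
    intro k x hx; rw [hM]; simp [hx]
  have hMsum : ∀ x y : X,
      ∑ k : {x : X // ¬ x = x₀}, (Mcol k x - Mcol k y) ^ 2 = d x y ^ 2 := by
    intro x y
    by_cases hx : x = x₀ <;> by_cases hy : y = x₀
    · rw [Finset.sum_eq_zero fun k _ => by rw [hM0' k x hx, hM0' k y hy]; ring,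
        hx, hy, metric_self hd.1 x₀]
      norm_num
    · have hstep : ∑ k : {x : X // ¬ x = x₀}, (Mcol k x - Mcol k y) ^ 2
          = ∑ k : {x : X // ¬ x = x₀}, C k ⟨y, hy⟩ * C k ⟨y, hy⟩ :=
        Finset.sum_congr rfl fun k _ => by rw [hM0' k x hx, hMne k y hy]; ring
      rw [hstep, hCC y hy y hy, metric_self hd.1 y, hx]
      ring
    · have hstep : ∑ k : {x : X // ¬ x = x₀}, (Mcol k x - Mcol k y) ^ 2
          = ∑ k : {x : X // ¬ x = x₀}, C k ⟨x, hx⟩ * C k ⟨x, hx⟩ :=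
        Finset.sum_congr rfl fun k _ => by rw [hM0' k y hy, hMne k x hx]; ring
      rw [hstep, hCC x hx x hx, metric_self hd.1 x, hy, hd.1.2.1 x x₀]
      ring
    · have hstep : ∑ k : {x : X // ¬ x = x₀}, (Mcol k x - Mcol k y) ^ 2
          = ∑ k : {x : X // ¬ x = x₀},
            (C k ⟨x, hx⟩ * C k ⟨x, hx⟩ - 2 * (C k ⟨x, hx⟩ * C k ⟨y, hy⟩)
              + C k ⟨y, hy⟩ * C k ⟨y, hy⟩) :=
        Finset.sum_congr rfl fun k _ => by rw [hMne k x hx, hMne k y hy]; ring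
      rw [hstep, Finset.sum_add_distrib, Finset.sum_sub_distrib, ← Finset.mul_sum,
        hCC x hx x hx, hCC x hx y hy, hCC y hy y hy, metric_self hd.1 x, metric_self hd.1 y]
      ring
  refine ⟨Φ, fun x y => ?_⟩
  have hΦapp : ∀ (x : X) (i : Fin n),
      Φ x i = ∑ k : {x : X // ¬ x = x₀}, if ι k = i then Mcol k x else 0 :=
    fun x i => rfl
  rw [EuclideanSpace.dist_eq]
  have h1 : ∀ i : Fin n, dist (Φ x i) (Φ y i) ^ 2
      = (∑ k : {x : X // ¬ x = x₀}, if ι k = i then (Mcol k x - Mcol k y) else 0) ^ 2 := by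
    intro i
    rw [Real.dist_eq, sq_abs, hΦapp, hΦapp, ← Finset.sum_sub_distrib]
    congr 1
    refine Finset.sum_congr rfl fun k _ => ?_
    split <;> simp
  rw [Finset.sum_congr rfl fun i _ => h1 i, hB2 (fun k => Mcol k x - Mcol k y), hMsum,
    Real.sqrt_sq (hdnn x y)]

theorem stmt19 (n : ℕ) (X : Type*) [Fintype X] (d : X → X → ℝ)
    (hd : IsUltrametric d) :
    (∃ Φ : X → EuclideanSpace ℝ (Fin n),
      ∀ x y, dist (Φ x) (Φ y) = d x y) ↔ Fintype.card X ≤ n + 1 := by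
  constructor
  · rintro ⟨Φ, hΦ⟩
    exact forward_dir hd Φ hΦ
  · exact backward_dir hd
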